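/- Let C = p_r … p_s be a configuration of g-2PATH of Type II with a free left hand and r < 0, and let j_0 be the smallest j with 0 ≤ j such that W(r, j) is finite. Then C satisfies CNI if and only if NI(r+1, j_0) holds. -/

import Mathlib

open scoped Classical

/-- Two grid positions are adjacent iff their L1 distance is 1. -/
def gridAdj (p q : ℤ × ℤ) : Prop := |p.1 - q.1| + |p.2 - q.2| = 1

lemma gridAdj_symm {p q : ℤ × ℤ} (h : gridAdj p q) : gridAdj q p := by
  unfold gridAdj at h ⊢
  rw [abs_sub_comm q.1 p.1, abs_sub_comm q.2 p.2]
  exact h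

lemma gridAdj_irrefl (p : ℤ × ℤ) : ¬ gridAdj p p := by simp [gridAdj]

/-- The graph induced on a set `X` of grid positions. -/
def gridGraph (X : Set (ℤ × ℤ)) : SimpleGraph (ℤ × ℤ) where
  Adj p q := p ∈ X ∧ q ∈ X ∧ gridAdj p q
  symm := ⟨fun p q h => ⟨h.2.1, h.1, gridAdj_symm h.2.2⟩⟩
  loopless := ⟨fun p h => gridAdj_irrefl p h.2.2⟩

/-- Graph distance inside the set `X`. -/
noncomputable def gdist (X : Set (ℤ × ℤ)) (p q : ℤ × ℤ) : ℕ := (gridGraph X).dist p q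

/-- The boundary condition of `p` in `X`: it records which of the four
neighbors of `p` lie in `X`. -/
def bcond (X : Set (ℤ × ℤ)) (p : ℤ × ℤ) : Set (ℤ × ℤ) := {q ∈ X | gridAdj p q}

/-- The set `M(v, t, X)` of nodes `w` with `d(v_gen, w) + d(w, v) ≤ t`. -/
noncomputable def Mset (v : ℤ × ℤ) (t : ℕ) (X : Set (ℤ × ℤ)) : Set (ℤ × ℤ) :=
  {w ∈ X | gdist X (0, 0) w + gdist X w v ≤ t}

/-- The available information (local map) `ai(v, t, X)`; `none` plays the role of `Q`. -/
noncomputable def ai (v : ℤ × ℤ) (t : ℕ) (X : Set (ℤ × ℤ)) :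
    Option (ℕ × (ℤ × ℤ) × Set ((ℤ × ℤ) × Set (ℤ × ℤ))) :=
  if v ∈ X ∧ (gridGraph X).Reachable (0, 0) v ∧ gdist X (0, 0) v ≤ t then
    some (t, v, (fun w => (w, bcond X w)) '' Mset v t X)
  else none

/-- `X ≡'_{t,v} Y` : `v ∈ X ∩ Y` and `ai(v,t,X) = ai(v,t,Y) ≠ Q`. -/
def equivAt (t : ℕ) (v : ℤ × ℤ) (X Y : Set (ℤ × ℤ)) : Prop :=
  v ∈ X ∧ v ∈ Y ∧ ai v t X = ai v t Y ∧ ai v t X ≠ none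

/-- A configuration: a finite connected set of positions containing the origin. -/
def IsConfig (X : Set (ℤ × ℤ)) : Prop :=
  X.Finite ∧ (0, 0) ∈ X ∧ ∀ p ∈ X, ∀ q ∈ X, (gridGraph X).Reachable p q

/-- `Y` is a consistent extension of the subset `M` of `X`. -/
def ConsExt (X M Y : Set (ℤ × ℤ)) : Prop := M ⊆ Y ∧ ∀ w ∈ M, bcond X w = bcond Y w

/-- `p` restricted to the index interval `[r, s]` is a simple, non-self-touching
lattice path through the origin `p 0 = (0,0)` (a g-2PATH configuration). -/
def IsPathOn (p : ℤ → ℤ × ℤ) (r s : ℤ) : Prop :=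
  r ≤ 0 ∧ 0 ≤ s ∧ p 0 = (0, 0) ∧
    (∀ m, r ≤ m → m < s → gridAdj (p m) (p (m + 1))) ∧
    (∀ m n, r ≤ m → m ≤ s → r ≤ n → n ≤ s → p m = p n → m = n) ∧
    (∀ m n, r ≤ m → m + 2 ≤ n → n ≤ s → ¬ gridAdj (p m) (p n))

/-- A configuration of g-2PATH. -/
structure GPath2 where
  r : ℤ
  s : ℤ
  p : ℤ → ℤ × ℤ
  isPath : IsPathOn p r s

/-- The set of positions of the path. -/
def pathSet (C : GPath2) : Set (ℤ × ℤ) := C.p '' Set.Icc C.r C.s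

/-- The path obtained from the sub-path `p_i … p_j` of `C` by appending the
sequence `x0` on the left and `x1` on the right. -/
def extFun (C : GPath2) (i j : ℤ) (x0 x1 : List (ℤ × ℤ)) : ℤ → ℤ × ℤ := fun m =>
  if m < i then x0.getD (m - (i - x0.length)).toNat (0, 0)
  else if m ≤ j then C.p m
  else x1.getD (m - (j + 1)).toNat (0, 0)

/-- `(x0, x1)` is a pair of sequences of positions such that `x0 p_i … p_j x1`
is a configuration of g-2PATH that is a consistent extension of the sub-path
`p_i … p_j` of `C` (boundary conditions of `p_i … p_j` are preserved). -/
def IsExtPair (C : GPath2) (i j : ℤ) (x0 x1 : List (ℤ × ℤ)) : Prop :=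
  C.r ≤ i ∧ i ≤ 0 ∧ 0 ≤ j ∧ j ≤ C.s ∧
    IsPathOn (extFun C i j x0 x1) (i - x0.length) (j + x1.length) ∧
    ∀ m, i ≤ m → m ≤ j →
      bcond (pathSet C) (C.p m) =
        bcond (extFun C i j x0 x1 '' Set.Icc (i - (x0.length : ℤ)) (j + (x1.length : ℤ)))
          (C.p m)

def Wset (C : GPath2) (i j : ℤ) : Set (List (ℤ × ℤ) × List (ℤ × ℤ)) :=
  {w | IsExtPair C i j w.1 w.2}

def Uset (C : GPath2) (i j : ℤ) : Set (List (ℤ × ℤ)) := Prod.fst '' Wset C i j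

def Vset (C : GPath2) (i j : ℤ) : Set (List (ℤ × ℤ)) := Prod.snd '' Wset C i j

/-- `f(i,j)`: the supremum of lengths of consistent left extensions. -/
noncomputable def fval (C : GPath2) (i j : ℤ) : ENat := ⨆ x ∈ Uset C i j, (x.length : ENat)

/-- `g(i,j)`: the supremum of lengths of consistent right extensions. -/
noncomputable def gval (C : GPath2) (i j : ℤ) : ENat := ⨆ x ∈ Vset C i j, (x.length : ENat)

/-- `NI(i,j)` : `W(i,j) = U(i,j) × V(i,j)`. -/
def NI (C : GPath2) (i j : ℤ) : Prop := Wset C i j = Uset C i j ×ˢ Vset C i j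

def Kset (C : GPath2) : Set (ℤ × ℤ) :=
  {ij | C.r ≤ ij.1 ∧ ij.1 ≤ 0 ∧ 0 ≤ ij.2 ∧ ij.2 ≤ C.s ∧ (Wset C ij.1 ij.2).Finite}

def Iset (C : GPath2) : Set (ℤ × ℤ) :=
  {ij | C.r ≤ ij.1 - 1 ∧ ij.1 ≤ 0 ∧ 0 ≤ ij.2 ∧ ij.2 ≤ C.s ∧
    (Wset C ij.1 ij.2).Infinite ∧ (Wset C (ij.1 - 1) ij.2).Finite}

def Jset (C : GPath2) : Set (ℤ × ℤ) :=
  {ij | C.r ≤ ij.1 ∧ ij.1 ≤ 0 ∧ 0 ≤ ij.2 ∧ ij.2 + 1 ≤ C.s ∧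
    (Wset C ij.1 ij.2).Infinite ∧ (Wset C ij.1 (ij.2 + 1)).Finite}

/-- The condition of noninterference of extensions. -/
def CNI (C : GPath2) : Prop := ∀ ij ∈ Kset C ∪ Iset C ∪ Jset C, NI C ij.1 ij.2

/-- The radius of `X`: the largest distance from the origin within `X`. -/
noncomputable def rad (X : Set (ℤ × ℤ)) : ℕ := sSup {n | ∃ v ∈ X, gdist X (0, 0) v = n}

def EquivStep (t : ℕ) (C C' : GPath2) : Prop := ∃ v, equivAt t v (pathSet C) (pathSet C')

/-- `t` is safe for `C`: some chain `C ≡'_t C₁ ≡'_t … ≡'_t C'` ends in a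
configuration of radius `> t`. -/
def Safe (t : ℕ) (C : GPath2) : Prop :=
  ∃ C' : GPath2, Relation.ReflTransGen (EquivStep t) C C' ∧ t < rad (pathSet C')

/-- The minimum firing time of `C` for g-2PATH: the least unsafe time. -/
noncomputable def mft (C : GPath2) : ℕ := sInf {t | ¬ Safe t C}

/-- `T̃ = min_{r ≤ i ≤ 0 ≤ j ≤ s} max {−2i + j + g(i,j), 2j − i + f(i,j)}`. -/
noncomputable def Ttilde (C : GPath2) : ENat :=
  sInf {x : ENat | ∃ i j : ℤ, C.r ≤ i ∧ i ≤ 0 ∧ 0 ≤ j ∧ j ≤ C.s ∧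
    x = max (((-2 * i + j).toNat : ENat) + gval C i j)
            (((2 * j - i).toNat : ENat) + fval C i j)}

/-- The left hand `p_r … p_0` of `C` is free. -/
def FreeLeft (C : GPath2) : Prop := C.r = 0 ∨ (C.r < 0 ∧ fval C (C.r + 1) C.s = ⊤)

/-- The right hand `p_0 … p_s` of `C` is free. -/
def FreeRight (C : GPath2) : Prop := C.s = 0 ∨ (0 < C.s ∧ gval C C.r (C.s - 1) = ⊤)

/-! ### Auxiliary material -/

/-- The list of path positions `p a, …, p b`. -/
def pseg (C : GPath2) (a b : ℤ) : List (ℤ × ℤ) :=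
  (List.range (b + 1 - a).toNat).map (fun k : ℕ => C.p (a + (k : ℤ)))

lemma pseg_length (C : GPath2) (a b : ℤ) : (pseg C a b).length = (b + 1 - a).toNat := by
  rw [pseg, List.length_map, List.length_range]

lemma pseg_getD_all (C : GPath2) (a b : ℤ) (k : ℕ) (d : ℤ × ℤ) :
    (pseg C a b).getD k d = if (k : ℤ) < b + 1 - a then C.p (a + (k : ℤ)) else d := by
  unfold pseg
  rw [List.getD_eq_getElem?_getD, List.getElem?_map]
  by_cases h : k < (b + 1 - a).toNat
  · rw [List.getElem?_range h, if_pos (by omega)]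
    rfl
  · rw [List.getElem?_eq_none (by rw [List.length_range]; omega), if_neg (by omega)]
    rfl

lemma extFun_lt {C : GPath2} {i j m : ℤ} (x0 x1 : List (ℤ × ℤ)) (h : m < i) :
    extFun C i j x0 x1 m = x0.getD (m - (i - x0.length)).toNat (0, 0) := by
  simp [extFun, h]

lemma extFun_mid {C : GPath2} {i j m : ℤ} (x0 x1 : List (ℤ × ℤ)) (h1 : i ≤ m) (h2 : m ≤ j) :
    extFun C i j x0 x1 m = C.p m := by
  rw [extFun, if_neg (by omega), if_pos h2]

lemma extFun_gt {C : GPath2} {i j m : ℤ} (x0 x1 : List (ℤ × ℤ)) (hi : i ≤ 0) (hj : 0 ≤ j)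
    (h : j < m) : extFun C i j x0 x1 m = x1.getD (m - (j + 1)).toNat (0, 0) := by
  rw [extFun, if_neg (by omega), if_neg (by omega)]

lemma extFun_absorb_right (C : GPath2) {i j j' : ℤ} (hi : i ≤ 0) (hj : 0 ≤ j) (hjj' : j ≤ j')
    (x0 x1 : List (ℤ × ℤ)) (m : ℤ) :
    extFun C i j x0 (pseg C (j + 1) j' ++ x1) m = extFun C i j' x0 x1 m := by
  rcases lt_or_ge m i with h | h
  · rw [extFun_lt _ _ h, extFun_lt _ _ h]
  rcases le_or_gt m j with h2 | h2
  · rw [extFun_mid _ _ h h2, extFun_mid _ _ h (le_trans h2 hjj')]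
  rcases le_or_gt m j' with h3 | h3
  · rw [extFun_gt _ _ hi hj h2, extFun_mid _ _ h h3]
    rw [List.getD_append _ _ _ _ (by rw [pseg_length]; omega)]
    rw [pseg_getD_all, if_pos (by omega)]
    congr 1; omega
  · rw [extFun_gt _ _ hi hj h2, extFun_gt _ _ hi (le_trans hj hjj') h3]
    rw [List.getD_append_right _ _ _ _ (by rw [pseg_length]; omega)]
    congr 1; rw [pseg_length]; omega

lemma extFun_absorb_left (C : GPath2) {i' i j : ℤ} (hii : i' ≤ i) (hi : i ≤ 0) (hj : 0 ≤ j)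
    (x0 x1 : List (ℤ × ℤ)) (m : ℤ) (hm : i' - x0.length ≤ m) :
    extFun C i j (x0 ++ pseg C i' (i - 1)) x1 m = extFun C i' j x0 x1 m := by
  have hlen : ((x0 ++ pseg C i' (i - 1)).length : ℤ) = x0.length + (i - i') := by
    simp only [List.length_append, pseg_length, Nat.cast_add]; omega
  rcases le_or_gt i m with h | h
  · rcases le_or_gt m j with h2 | h2
    · rw [extFun_mid _ _ h h2, extFun_mid _ _ (le_trans hii h) h2]
    · rw [extFun_gt _ _ hi hj h2, extFun_gt _ _ (le_trans hii hi) hj h2]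
  · rw [extFun_lt _ _ h]
    rcases lt_or_ge m i' with h2 | h2
    · rw [extFun_lt _ _ h2]
      rw [List.getD_append _ _ _ _ (by omega)]
      congr 2
      omega
    · rw [extFun_mid _ _ h2 (by omega)]
      rw [List.getD_append_right _ _ _ _ (by omega)]
      rw [pseg_getD_all, if_pos (by omega)]
      congr 1
      omega

lemma isPathOn_congr {F G : ℤ → ℤ × ℤ} {a b : ℤ} (hfg : ∀ m, a ≤ m → m ≤ b → F m = G m)
    (h : IsPathOn F a b) : IsPathOn G a b := by
  obtain ⟨h1, h2, h3, h4, h5, h6⟩ := h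
  refine ⟨h1, h2, by rw [← hfg 0 h1 h2]; exact h3, ?_, ?_, ?_⟩
  · intro m hm hm'
    rw [← hfg m hm (by omega), ← hfg (m + 1) (by omega) (by omega)]
    exact h4 m hm hm'
  · intro m n hm hm' hn hn' he
    exact h5 m n hm hm' hn hn' (by rw [hfg m hm hm', hfg n hn hn']; exact he)
  · intro m n hm hmn hn
    rw [← hfg m hm (by omega), ← hfg n (by omega) hn]
    exact h6 m n hm hmn hn

lemma image_Icc_congr {F G : ℤ → ℤ × ℤ} {a b : ℤ} (hfg : ∀ m, a ≤ m → m ≤ b → F m = G m) :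
    F '' Set.Icc a b = G '' Set.Icc a b :=
  Set.image_congr fun m hm => hfg m hm.1 hm.2

lemma memW_absorb_right {C : GPath2} {i j j' : ℤ} {x0 x1 : List (ℤ × ℤ)}
    (hj : 0 ≤ j) (hjj' : j ≤ j') (h : (x0, x1) ∈ Wset C i j') :
    (x0, pseg C (j + 1) j' ++ x1) ∈ Wset C i j := by
  obtain ⟨h1, h2, h3, h4, h5, h6⟩ := h
  have hlen : (j : ℤ) + ((pseg C (j + 1) j' ++ x1).length : ℤ) = j' + (x1.length : ℤ) := by
    simp only [List.length_append, pseg_length, Nat.cast_add]; omega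
  refine ⟨h1, h2, hj, le_trans hjj' h4, ?_, ?_⟩
  · rw [show ((j : ℤ) + ((pseg C (j + 1) j' ++ x1).length : ℤ)) = j' + (x1.length : ℤ) from hlen]
    exact isPathOn_congr (fun m _ _ => (extFun_absorb_right C h2 hj hjj' x0 x1 m).symm) h5
  · intro m hm hmj
    have himg : extFun C i j x0 (pseg C (j + 1) j' ++ x1) ''
        Set.Icc (i - (x0.length : ℤ)) (j + ((pseg C (j + 1) j' ++ x1).length : ℤ))
        = extFun C i j' x0 x1 '' Set.Icc (i - (x0.length : ℤ)) (j' + (x1.length : ℤ)) := by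
      rw [hlen]
      exact image_Icc_congr fun n _ _ => extFun_absorb_right C h2 hj hjj' x0 x1 n
    rw [himg]
    exact h6 m hm (le_trans hmj hjj')

lemma memW_absorb_left {C : GPath2} {i' i j : ℤ} {x0 x1 : List (ℤ × ℤ)}
    (hii : i' ≤ i) (hi : i ≤ 0) (h : (x0, x1) ∈ Wset C i' j) :
    (x0 ++ pseg C i' (i - 1), x1) ∈ Wset C i j := by
  obtain ⟨h1, h2, h3, h4, h5, h6⟩ := h
  have hlen : (i : ℤ) - (((x0 ++ pseg C i' (i - 1)).length : ℕ) : ℤ) = i' - (x0.length : ℤ) := by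
    simp only [List.length_append, pseg_length, Nat.cast_add]; omega
  refine ⟨le_trans h1 hii, hi, h3, h4, ?_, ?_⟩
  · rw [show ((i : ℤ) - (((x0 ++ pseg C i' (i - 1)).length : ℕ) : ℤ)) = i' - (x0.length : ℤ) from hlen]
    exact isPathOn_congr (fun m hm _ => (extFun_absorb_left C hii hi h3 x0 x1 m hm).symm) h5
  · intro m hm hmj
    have himg : extFun C i j (x0 ++ pseg C i' (i - 1)) x1 ''
        Set.Icc (i - (((x0 ++ pseg C i' (i - 1)).length : ℕ) : ℤ)) (j + (x1.length : ℤ))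
        = extFun C i' j x0 x1 '' Set.Icc (i' - (x0.length : ℤ)) (j + (x1.length : ℤ)) := by
      rw [hlen]
      exact image_Icc_congr fun n hn _ => extFun_absorb_left C hii hi h3 x0 x1 n hn
    rw [himg]
    exact h6 m (le_trans hii hm) hmj

lemma path_adj_index {F : ℤ → ℤ × ℤ} {a b : ℤ}
    (hnt : ∀ m n, a ≤ m → m + 2 ≤ n → n ≤ b → ¬ gridAdj (F m) (F n))
    {m n : ℤ} (hm : a ≤ m) (hm' : m ≤ b) (hn : a ≤ n) (hn' : n ≤ b)
    (hadj : gridAdj (F m) (F n)) : n = m - 1 ∨ n = m + 1 := by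
  by_contra hcon
  push_neg at hcon
  rcases show n = m ∨ m + 2 ≤ n ∨ n + 2 ≤ m by omega with h | h | h
  · subst h; exact gridAdj_irrefl _ hadj
  · exact hnt m n hm h hn' hadj
  · exact hnt n m hn h hm' (gridAdj_symm hadj)

lemma bcond_path_interior {F : ℤ → ℤ × ℤ} {a b : ℤ}
    (hadj : ∀ m, a ≤ m → m < b → gridAdj (F m) (F (m + 1)))
    (hnt : ∀ m n, a ≤ m → m + 2 ≤ n → n ≤ b → ¬ gridAdj (F m) (F n))
    {m : ℤ} (ha : a < m) (hb : m < b) :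
    bcond (F '' Set.Icc a b) (F m) = {F (m - 1), F (m + 1)} := by
  ext q
  constructor
  · rintro ⟨⟨n, ⟨hn1, hn2⟩, rfl⟩, hq⟩
    rcases path_adj_index hnt (le_of_lt ha) (le_of_lt hb) hn1 hn2 hq with h | h
    · subst h; exact Set.mem_insert _ _
    · subst h; exact Set.mem_insert_iff.mpr (Or.inr rfl)
  · rintro (rfl | rfl)
    · refine ⟨⟨m - 1, ⟨by omega, by omega⟩, rfl⟩, ?_⟩
      have h := hadj (m - 1) (by omega) (by omega)
      rw [show m - 1 + 1 = m by omega] at h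
      exact gridAdj_symm h
    · exact ⟨⟨m + 1, ⟨by omega, by omega⟩, rfl⟩, hadj m (by omega) (by omega)⟩

lemma bcond_indep (C : GPath2) {j : ℤ} (z0 x1 : List (ℤ × ℤ)) {m : ℤ}
    (hr : C.r ≤ -1) (hm1 : 1 ≤ m) (hmj : m ≤ j)
    (H : IsPathOn (extFun C (C.r + 1) j z0 x1) (C.r + 1 - z0.length) (j + x1.length)) :
    bcond (extFun C (C.r + 1) j z0 x1 ''
        Set.Icc (C.r + 1 - (z0.length : ℤ)) (j + (x1.length : ℤ))) (C.p m)
      = {q | (∃ n : ℤ, C.r + 1 ≤ n ∧ n ≤ j + (x1.length : ℤ) ∧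
          q = extFun C (C.r + 1) j [] x1 n) ∧ gridAdj (C.p m) q} := by
  have hFp : ∀ n : ℤ, C.r + 1 ≤ n →
      extFun C (C.r + 1) j z0 x1 n = extFun C (C.r + 1) j [] x1 n := by
    intro n hn
    rcases le_or_gt n j with h | h
    · rw [extFun_mid _ _ hn h, extFun_mid _ _ hn h]
    · rw [extFun_gt _ _ (by omega) (by omega) h, extFun_gt _ _ (by omega) (by omega) h]
  ext q
  constructor
  · rintro ⟨⟨n, ⟨hn1, hn2⟩, rfl⟩, hadjq⟩
    have hge : C.r + 1 ≤ n := by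
      by_contra hcon
      push_neg at hcon
      have hFm : extFun C (C.r + 1) j z0 x1 m = C.p m := extFun_mid _ _ (by omega) hmj
      have hnt := H.2.2.2.2.2 n m hn1 (by omega) (by omega)
      exact hnt (hFm ▸ gridAdj_symm hadjq)
    exact ⟨⟨n, hge, hn2, hFp n hge⟩, hadjq⟩
  · rintro ⟨⟨n, hn1, hn2, rfl⟩, hadjq⟩
    exact ⟨⟨n, ⟨by omega, hn2⟩, hFp n hn1⟩, hadjq⟩

lemma fst_nil (C : GPath2) (hneg : C.r < 0) {j : ℤ} {x0 x1 : List (ℤ × ℤ)}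
    (h : (x0, x1) ∈ Wset C C.r j) : x0 = [] := by
  by_contra hne
  have hlen : 1 ≤ x0.length := List.length_pos_iff.mpr hne
  obtain ⟨h1, h2, h3, h4, h5, h6⟩ := (h : IsExtPair C C.r j x0 x1)
  dsimp only at h5 h6
  have hadjF : gridAdj (extFun C C.r j x0 x1 (C.r - 1)) (extFun C C.r j x0 x1 C.r) := by
    have := h5.2.2.2.1 (C.r - 1) (by omega) (by omega)
    rw [show C.r - 1 + 1 = C.r by omega] at this
    exact this
  have hFr : extFun C C.r j x0 x1 C.r = C.p C.r := extFun_mid _ _ le_rfl (by omega)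
  have hmem' : extFun C C.r j x0 x1 (C.r - 1) ∈
      bcond (extFun C C.r j x0 x1 ''
        Set.Icc (C.r - (x0.length : ℤ)) (j + (x1.length : ℤ))) (C.p C.r) :=
    ⟨⟨C.r - 1, ⟨by omega, by omega⟩, rfl⟩, by rw [← hFr]; exact gridAdj_symm hadjF⟩
  rw [← h6 C.r le_rfl (by omega)] at hmem'
  obtain ⟨hq1, hq2⟩ := hmem'
  rw [pathSet] at hq1
  obtain ⟨n, ⟨hn1, hn2⟩, hqn⟩ := hq1
  rw [← hqn] at hq2
  have hP := C.isPath
  have hn' : n = C.r - 1 ∨ n = C.r + 1 :=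
    path_adj_index hP.2.2.2.2.2 le_rfl (by have := hP.2.1; have := hP.1; omega) hn1 hn2 hq2
  have hn2' : n = C.r + 1 := by omega
  have hmid : extFun C C.r j x0 x1 (C.r + 1) = C.p (C.r + 1) :=
    extFun_mid _ _ (by omega) (by omega)
  have heq : extFun C C.r j x0 x1 (C.r - 1) = extFun C C.r j x0 x1 (C.r + 1) := by
    rw [← hqn, hn2', hmid]
  have := h5.2.2.2.2.1 (C.r - 1) (C.r + 1) (by omega) (by omega) (by omega) (by omega) heq
  omega

lemma NI_left (C : GPath2) (hneg : C.r < 0) (j : ℤ) : NI C C.r j := by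
  apply Set.Subset.antisymm
  · rintro ⟨a, b⟩ h
    exact ⟨⟨_, h, rfl⟩, ⟨_, h, rfl⟩⟩
  · rintro ⟨a, b⟩ ⟨ha, hb⟩
    obtain ⟨⟨a', y1⟩, hay, ha'⟩ := ha
    obtain ⟨⟨y0, b'⟩, hyb, hb'⟩ := hb
    simp only at ha' hb'
    subst ha'; subst hb'
    have h1 : a' = [] := fst_nil C hneg hay
    have h2 : y0 = [] := fst_nil C hneg hyb
    rw [h1]
    rw [h2] at hyb
    exact hyb

lemma W_infinite_base (C : GPath2) (hfree : fval C (C.r + 1) C.s = ⊤) :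
    (Wset C (C.r + 1) C.s).Infinite := by
  by_contra hcon
  rw [Set.not_infinite] at hcon
  have hU : (Uset C (C.r + 1) C.s).Finite := hcon.image _
  obtain ⟨N, hN⟩ := (hU.image List.length).bddAbove
  have hle : fval C (C.r + 1) C.s ≤ (N : ℕ∞) := by
    unfold fval
    refine iSup₂_le fun x hx => ?_
    exact_mod_cast hN (Set.mem_image_of_mem _ hx)
  rw [hfree] at hle
  exact absurd (top_le_iff.mp hle).symm (by simp)

lemma W_infinite (C : GPath2) (hfree : fval C (C.r + 1) C.s = ⊤) {i j : ℤ}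
    (hi : C.r + 1 ≤ i) (hi0 : i ≤ 0) (hj : 0 ≤ j) (hjs : j ≤ C.s) :
    (Wset C i j).Infinite := by
  have hbase := W_infinite_base C hfree
  have hinj : Function.Injective
      (fun w : List (ℤ × ℤ) × List (ℤ × ℤ) =>
        (w.1 ++ pseg C (C.r + 1) (i - 1), pseg C (j + 1) C.s ++ w.2)) := by
    rintro ⟨a, b⟩ ⟨c, d⟩ hw
    simp only [Prod.mk.injEq] at hw
    exact Prod.ext (List.append_cancel_right hw.1) (List.append_cancel_left hw.2)
  refine (hbase.image hinj.injOn).mono ?_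
  rintro w ⟨⟨a, b⟩, hw, rfl⟩
  exact memW_absorb_left hi hi0 (memW_absorb_right hj hjs hw)

lemma W_empty_of_gt (C : GPath2) {i j : ℤ} (h : C.s < j) : Wset C i j = ∅ :=
  Set.eq_empty_of_forall_notMem fun w hw => absurd hw.2.2.2.1 (by omega)

lemma NI_of_W_empty {C : GPath2} {i j : ℤ} (h : Wset C i j = ∅) : NI C i j := by
  unfold NI Uset Vset
  rw [h]
  simp

lemma NI_lift (C : GPath2) (hneg : C.r < 0) {j0 j : ℤ} (hj0 : 0 ≤ j0) (hj0j : j0 ≤ j)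
    (hjs : j ≤ C.s) (hni : NI C (C.r + 1) j0) : NI C (C.r + 1) j := by
  rcases eq_or_lt_of_le hj0j with rfl | hlt
  · exact hni
  apply Set.Subset.antisymm
  · rintro ⟨a, b⟩ hw
    exact ⟨⟨_, hw, rfl⟩, ⟨_, hw, rfl⟩⟩
  rintro ⟨a, b⟩ ⟨ha, hb⟩
  obtain ⟨⟨a', y1⟩, hay, ha'⟩ := ha
  obtain ⟨⟨y0, b'⟩, hyb, hb'⟩ := hb
  simp only at ha' hb'
  subst ha'; subst hb'
  have h1 : (a', pseg C (j0 + 1) j ++ y1) ∈ Wset C (C.r + 1) j0 :=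
    memW_absorb_right hj0 hj0j hay
  have h2 : (y0, pseg C (j0 + 1) j ++ b') ∈ Wset C (C.r + 1) j0 :=
    memW_absorb_right hj0 hj0j hyb
  have hmem : (a', pseg C (j0 + 1) j ++ b') ∈ Wset C (C.r + 1) j0 := by
    rw [NI] at hni
    rw [hni]
    exact ⟨⟨_, h1, rfl⟩, ⟨_, h2, rfl⟩⟩
  obtain ⟨m1, m2, m3, m4, m5, m6⟩ := (hmem : IsExtPair C (C.r + 1) j0 a' (pseg C (j0 + 1) j ++ b'))
  dsimp only at m5 m6
  obtain ⟨k1, k2, k3, k4, k5, k6⟩ := (hyb : IsExtPair C (C.r + 1) j y0 b')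
  dsimp only at k5 k6
  have hlen : (j0 : ℤ) + ((pseg C (j0 + 1) j ++ b').length : ℤ) = j + (b'.length : ℤ) := by
    simp only [List.length_append, pseg_length, Nat.cast_add]; omega
  have hfeq : ∀ m : ℤ,
      extFun C (C.r + 1) j0 a' (pseg C (j0 + 1) j ++ b') m = extFun C (C.r + 1) j a' b' m :=
    extFun_absorb_right C (by omega) hj0 hj0j a' b'
  rw [hlen] at m5
  have hpath : IsPathOn (extFun C (C.r + 1) j a' b') (C.r + 1 - (a'.length : ℤ))
      (j + (b'.length : ℤ)) := isPathOn_congr (fun m _ _ => hfeq m) m5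
  refine ⟨m1, m2, by omega, hjs, hpath, ?_⟩
  intro m hm hmj
  have himg : extFun C (C.r + 1) j a' b' ''
      Set.Icc (C.r + 1 - (a'.length : ℤ)) (j + (b'.length : ℤ))
      = extFun C (C.r + 1) j0 a' (pseg C (j0 + 1) j ++ b') ''
        Set.Icc (C.r + 1 - (a'.length : ℤ)) ((j0 : ℤ) + ((pseg C (j0 + 1) j ++ b').length : ℤ)) := by
    rw [hlen]
    exact (image_Icc_congr fun n _ _ => hfeq n).symm
  rcases le_or_gt m j0 with hcase | hcase
  · rw [himg]
    exact m6 m hm hcase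
  rcases eq_or_lt_of_le hmj with hmeq | hmlt
  · -- m = j, and j ≥ j0 + 1 ≥ 1
    subst hmeq
    have e1 := k6 m (by omega) le_rfl
    rw [e1]
    rw [bcond_indep C y0 b' (by omega) (by omega) le_rfl k5]
    rw [bcond_indep C a' b' (by omega) (by omega) le_rfl hpath]
  · -- j0 < m < j : interior on both sides
    have hP := C.isPath
    have hps : bcond (pathSet C) (C.p m) = {C.p (m - 1), C.p (m + 1)} := by
      rw [pathSet]
      exact bcond_path_interior hP.2.2.2.1 hP.2.2.2.2.2 (by omega) (by omega)
    have hFi : bcond (extFun C (C.r + 1) j a' b' ''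
        Set.Icc (C.r + 1 - (a'.length : ℤ)) (j + (b'.length : ℤ)))
        (extFun C (C.r + 1) j a' b' m)
        = {extFun C (C.r + 1) j a' b' (m - 1), extFun C (C.r + 1) j a' b' (m + 1)} :=
      bcond_path_interior hpath.2.2.2.1 hpath.2.2.2.2.2 (by omega) (by omega)
    have hm0 : extFun C (C.r + 1) j a' b' m = C.p m := extFun_mid _ _ (by omega) (by omega)
    have hm1' : extFun C (C.r + 1) j a' b' (m - 1) = C.p (m - 1) :=
      extFun_mid _ _ (by omega) (by omega)
    have hm2' : extFun C (C.r + 1) j a' b' (m + 1) = C.p (m + 1) :=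
      extFun_mid _ _ (by omega) (by omega)
    rw [hm0, hm1', hm2'] at hFi
    rw [hps, hFi]

theorem stmt12 (C : GPath2) (hl : FreeLeft C) (hr : ¬ FreeRight C) (hneg : C.r < 0)
    (j0 : ℤ) (hj0 : 0 ≤ j0) (hfin : (Wset C C.r j0).Finite)
    (hmin : ∀ j : ℤ, 0 ≤ j → j < j0 → ¬ (Wset C C.r j).Finite) :
    CNI C ↔ NI C (C.r + 1) j0 := by
  have hfree : fval C (C.r + 1) C.s = ⊤ := by
    rcases hl with h | ⟨_, h⟩
    · exact absurd h (by omega)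
    · exact h
  have hs0 : (0 : ℤ) ≤ C.s := C.isPath.2.1
  constructor
  · intro hcni
    by_cases hj0s : j0 ≤ C.s
    · refine hcni (C.r + 1, j0) (Set.mem_union_left _ (Set.mem_union_right _ ?_))
      refine ⟨by omega, by omega, hj0, hj0s,
        W_infinite C hfree (by omega) (by omega) hj0 hj0s, ?_⟩
      rw [show C.r + 1 - 1 = C.r by omega]
      exact hfin
    · push_neg at hj0s
      exact NI_of_W_empty (W_empty_of_gt C (by omega))
  · rintro hni ⟨i, j⟩ hij
    rcases hij with (hK | hI) | hJ
    · obtain ⟨h1, h2, h3, h4, h5⟩ := hK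
      rcases eq_or_lt_of_le h1 with heq | hlt
      · rw [← heq]
        exact NI_left C hneg j
      · exact absurd h5 (W_infinite C hfree (by omega) h2 h3 h4)
    · obtain ⟨h1, h2, h3, h4, h5, h6⟩ := hI
      have hieq : i = C.r + 1 := by
        by_contra hne
        exact (W_infinite C hfree (by omega) (by omega) h3 h4) h6
      subst hieq
      have hjge : j0 ≤ j := by
        by_contra hlt
        push_neg at hlt
        rw [show C.r + 1 - 1 = C.r by omega] at h6
        exact hmin j h3 hlt h6
      exact NI_lift C hneg hj0 hjge h4 hni
    · obtain ⟨h1, h2, h3, h4, h5, h6⟩ := hJ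
      have hieq : i = C.r := by
        by_contra hne
        exact (W_infinite C hfree (by omega) h2 (by omega) h4) h6
      subst hieq
      exact NI_left C hneg j
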